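/- arXiv:1504.07851 — 7 statements merged into one kernel-verified Lean document; each statement's English description precedes it below -/
import Mathlib

section
/- Let R and S be strings over an alphabet Σ, let C_max be a maximal cover of S with respect to R, and let C be an arbitrary cover of S with respect to R. Then |C_max| ≤ 2|C| − 1. -/
/-- `sub R i j` is the substring `R[i..j]` of `R` (1-indexed, inclusive). -/
def sub {σ : Type*} (R : List σ) (i j : ℕ) : List σ := (R.drop (i - 1)).take (j - i + 1)

/-- `x` is a substring of `R`. -/
def IsSubstring {σ : Type*} (x R : List σ) : Prop := ∃ u v, R = u ++ x ++ v

/-- The string of `R` referred to by a block `(i, j)`. -/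
def blockStr {σ : Type*} (R : List σ) (b : ℕ × ℕ) : List σ := sub R b.1 b.2

/-- `C` is a cover (relative compression) of `S` with respect to `R`. -/
def IsCover {σ : Type*} (R S : List σ) (C : List (ℕ × ℕ)) : Prop :=
  (∀ b ∈ C, 1 ≤ b.1 ∧ b.1 ≤ b.2 ∧ b.2 ≤ R.length) ∧
  S = (C.map (blockStr R)).flatten

/-- A cover is maximal if no two consecutive blocks concatenate to a substring of `R`. -/
def IsMaximal {σ : Type*} (R : List σ) (C : List (ℕ × ℕ)) : Prop :=
  ∀ l : ℕ, ∀ h : l + 1 < C.length,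
    ¬ IsSubstring (blockStr R (C[l]'(by omega)) ++ blockStr R (C[l + 1]'h)) R

namespace MaxCoverAux

open List

variable {σ : Type*}

/-- Prefix sums of lengths. -/
def P (L : List (List σ)) (k : ℕ) : ℕ := ((L.map List.length).take k).sum

lemma P_zero (L : List (List σ)) : P L 0 = 0 := rfl

lemma P_add (L : List (List σ)) (a t : ℕ) : P L (a + t) = P L a + P (L.drop a) t := by
  simp [P, List.take_add, List.map_drop, List.sum_append]

lemma P_mono (L : List (List σ)) {a b : ℕ} (h : a ≤ b) : P L a ≤ P L b := by
  obtain ⟨t, rfl⟩ := Nat.exists_eq_add_of_le h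
  rw [P_add]; omega

lemma P_length (L : List (List σ)) : P L L.length = L.flatten.length := by
  rw [P, List.take_of_length_le (by simp), List.length_flatten]

lemma drop_P (L : List (List σ)) (k : ℕ) : L.flatten.drop (P L k) = (L.drop k).flatten :=
  List.drop_sum_flatten L k

lemma seg_eq (L : List (List σ)) (a t : ℕ) :
    (L.flatten.drop (P L a)).take (P (L.drop a) t) = ((L.drop a).take t).flatten := by
  rw [drop_P]; exact List.take_sum_flatten (L.drop a) t

lemma P_one_pos (L : List (List σ)) (hne : ∀ x ∈ L, x ≠ []) (h : L ≠ []) : 1 ≤ P L 1 := by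
  cases L with
  | nil => exact absurd rfl h
  | cons x t =>
    have : x ≠ [] := hne x List.mem_cons_self
    simp only [P, List.map_cons, List.take_succ_cons, List.take_zero, List.sum_cons,
      List.sum_nil, Nat.add_zero]
    exact List.length_pos_iff.mpr this

lemma flatten_take_one (x : List σ) (t : List (List σ)) :
    ((x :: t).take 1).flatten = x := by simp

lemma flatten_take_two (x y : List σ) (t : List (List σ)) :
    ((x :: y :: t).take 2).flatten = x ++ y := by simp

lemma chunk_eq (L : List (List σ)) (j : ℕ) (h : j < L.length) :
    (L.flatten.drop (P L j)).take (P L (j + 1) - P L j) = L[j] := by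
  have h1 : P L (j + 1) - P L j = P (L.drop j) 1 := by rw [P_add]; omega
  rw [h1, seg_eq, List.drop_eq_getElem_cons h, flatten_take_one]

lemma pair_eq (L : List (List σ)) (k : ℕ) (h : k + 1 < L.length) :
    (L.flatten.drop (P L k)).take (P L (k + 2) - P L k) = L[k] ++ L[k + 1] := by
  have h1 : P L (k + 2) - P L k = P (L.drop k) 2 := by rw [P_add]; omega
  rw [h1, seg_eq, List.drop_eq_getElem_cons (by omega : k < L.length),
    List.drop_eq_getElem_cons h, flatten_take_two]

/-- A `take`-of-`drop` slice is an infix of an enclosing slice. -/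
lemma slice_infix (S : List σ) {a b c d : ℕ} (hca : c ≤ a) (hab : a ≤ b) (hbd : b ≤ d) :
    (S.drop a).take (b - a) <:+: (S.drop c).take (d - c) := by
  have key : ((((S.drop c).take (d - c)).drop (a - c)).take (b - a))
      = (S.drop a).take (b - a) := by
    have h1 : c + (a - c) = a := by omega
    have h2 : d - c - (a - c) = d - a := by omega
    rw [List.drop_take, List.drop_drop, h1, h2, List.take_take,
      Nat.min_eq_left (by omega : b - a ≤ d - a)]
  rw [← key]
  exact ((List.take_prefix _ _).isInfix).trans ((List.drop_suffix _ _).isInfix)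

lemma infix_isSubstring {x R : List σ} (h : x <:+: R) : IsSubstring x R := by
  obtain ⟨u, v, h⟩ := h; exact ⟨u, v, h.symm⟩

lemma blockStr_infix (R : List σ) (b : ℕ × ℕ) : blockStr R b <:+: R :=
  ((List.take_prefix _ _).isInfix).trans ((List.drop_suffix _ _).isInfix)

lemma blockStr_length (R : List σ) (b : ℕ × ℕ) (h1 : 1 ≤ b.1) (h2 : b.1 ≤ b.2)
    (h3 : b.2 ≤ R.length) : 1 ≤ (blockStr R b).length := by
  simp only [blockStr, sub, List.length_take, List.length_drop]
  omega

end MaxCoverAux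

open MaxCoverAux in
/-- If `C_max` is a maximal cover and `C` an arbitrary cover of `S` w.r.t. `R`,
then `|C_max| ≤ 2|C| - 1`. -/
theorem maximal_cover_le {σ : Type*} (R S : List σ) (Cmax C : List (ℕ × ℕ))
    (hmax : IsCover R S Cmax) (hmaxmax : IsMaximal R Cmax)
    (hC : IsCover R S C) :
    Cmax.length ≤ 2 * C.length - 1 := by
  classical
  obtain ⟨hvalM, hSM⟩ := hmax
  obtain ⟨hvalC, hSC⟩ := hC
  set Lm : List (List σ) := Cmax.map (blockStr R) with hLm
  set Lc : List (List σ) := C.map (blockStr R) with hLc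
  set n := Cmax.length with hn
  set m := C.length with hm
  have hLmlen : Lm.length = n := by simp [hLm, hn]
  have hLclen : Lc.length = m := by simp [hLc, hm]
  set q : ℕ → ℕ := fun k => P Lm k with hqdef
  set p : ℕ → ℕ := fun j => P Lc j with hpdef
  -- getElem facts
  have hLmget : ∀ k (h : k < n), Lm[k]'(by omega) = blockStr R (Cmax[k]'h) := by
    intro k h; simp [hLm]
  have hLcget : ∀ j (h : j < m), Lc[j]'(by omega) = blockStr R (C[j]'h) := by
    intro j h; simp [hLc]
  -- elements of Lm are nonempty
  have hLmne : ∀ x ∈ Lm, x ≠ [] := by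
    intro x hx
    rw [hLm, List.mem_map] at hx
    obtain ⟨b, hb, rfl⟩ := hx
    have hv := hvalM b hb
    have := blockStr_length R b hv.1 hv.2.1 hv.2.2
    exact List.ne_nil_of_length_pos (by omega)
  -- strict increase of q
  have hqstep : ∀ k, k < n → q k + 1 ≤ q (k + 1) := by
    intro k hk
    have h1 : q (k + 1) = q k + P (Lm.drop k) 1 := P_add Lm k 1
    have h2 : 1 ≤ P (Lm.drop k) 1 := by
      apply P_one_pos
      · intro x hx; exact hLmne x (List.mem_of_mem_drop hx)
      · intro hnil
        have := congrArg List.length hnil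
        simp only [List.length_drop, List.length_nil] at this
        omega
    omega
  have hqmono : ∀ k k', k ≤ k' → q k ≤ q k' := fun k k' h => P_mono Lm h
  have hpmono : ∀ j j', j ≤ j' → p j ≤ p j' := fun j j' h => P_mono Lc h
  have hqn : q n = S.length := by
    rw [hqdef]; simp only []
    rw [← hLmlen, P_length, ← hSM]
  have hpm : p m = S.length := by
    rw [hpdef]; simp only []
    rw [← hLclen, P_length, ← hSC]
  have hqlt : ∀ k, k < n → q k < S.length := by
    intro k hk
    have := hqstep k hk
    have := hqmono (k + 1) n (by omega)
    omega
  -- from p j < p m conclude j < m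
  have hplt : ∀ j, p j < p m → j < m := by
    intro j hj
    by_contra h
    exact absurd (hpmono m j (by omega)) (by omega)
  -- the containing-block index
  set jk : ℕ → ℕ := fun k => Nat.findGreatest (fun j => p j ≤ q k) m with hjkdef
  have hjk1 : ∀ k, p (jk k) ≤ q k := by
    intro k
    exact Nat.findGreatest_spec (P := fun j => p j ≤ q k) (Nat.zero_le m)
      (by simp [hpdef, P_zero])
  have hjklt : ∀ k, k < n → jk k < m := by
    intro k hk
    have h1 := hjk1 k
    have h2 := hqlt k hk
    exact hplt (jk k) (by omega)
  have hjk2 : ∀ k, k < n → q k < p (jk k + 1) := by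
    intro k hk
    by_contra h
    have hle : jk k + 1 ≤ jk k :=
      Nat.le_findGreatest (by have := hjklt k hk; omega) (by omega)
    omega
  have hjkmono : ∀ k k', k ≤ k' → jk k ≤ jk k' := by
    intro k k' h
    exact Nat.le_findGreatest (Nat.findGreatest_le m)
      (le_trans (hjk1 k) (hqmono k k' h))
  -- the injection
  set f : ℕ → ℕ := fun k => 2 * jk k + (if q (k + 1) ≤ p (jk k + 1) then 0 else 1) with hfdef
  -- range bound
  have hfrange : ∀ k, k < n → f k < 2 * m - 1 := by
    intro k hk
    have hjlt := hjklt k hk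
    by_cases hc : q (k + 1) ≤ p (jk k + 1)
    · simp only [hfdef, hc, if_pos]
      omega
    · have h1 : p (jk k + 1) < q (k + 1) := by omega
      have h2 : q (k + 1) ≤ p m := by rw [hpm, ← hqn]; exact hqmono (k + 1) n (by omega)
      have h3 : jk k + 1 < m := hplt _ (by omega)
      simp only [hfdef, hc, if_neg, not_false_iff]
      omega
  -- key: two consecutive Cmax blocks inside one C block contradict maximality
  have hkey : ∀ k j, k + 1 < n → j < m → p j ≤ q k → q (k + 2) ≤ p (j + 1) → False := by
    intro k j hk hj hpj hqk
    apply hmaxmax k (by omega)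
    apply infix_isSubstring
    have hpair : (S.drop (q k)).take (q (k + 2) - q k)
        = blockStr R (Cmax[k]'(by omega)) ++ blockStr R (Cmax[k + 1]'(by omega)) := by
      rw [hSM]
      rw [pair_eq Lm k (by omega), hLmget k (by omega), hLmget (k + 1) (by omega)]
    have hchunk : (S.drop (p j)).take (p (j + 1) - p j) = blockStr R (C[j]'(by omega)) := by
      rw [hSC]
      rw [chunk_eq Lc j (by omega), hLcget j (by omega)]
    have hinf : (S.drop (q k)).take (q (k + 2) - q k)
        <:+: (S.drop (p j)).take (p (j + 1) - p j) :=
      slice_infix S hpj (hqmono k (k + 2) (by omega)) hqk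
    rw [hpair, hchunk] at hinf
    exact hinf.trans (blockStr_infix R _)
  -- injectivity (ordered version)
  have hstep : ∀ k k', k < n → k' < n → k < k' → f k = f k' → False := by
    intro k k' hk hk' hlt hfe
    have hjle : jk k ≤ jk k' := hjkmono k k' (by omega)
    by_cases h1 : q (k + 1) ≤ p (jk k + 1) <;> by_cases h2 : q (k' + 1) ≤ p (jk k' + 1) <;>
      simp only [hfdef, h1, h2, if_pos, if_neg, not_false_iff] at hfe
    · -- both contained, jk k = jk k'
      have hje : jk k = jk k' := by omega
      apply hkey k (jk k) (by omega) (hjklt k hk) (hjk1 k)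
      calc q (k + 2) ≤ q (k' + 1) := hqmono _ _ (by omega)
        _ ≤ p (jk k + 1) := by rw [hje]; exact h2
    · omega
    · omega
    · -- both crossing, jk k = jk k'
      have hje : jk k = jk k' := by omega
      have h3 : p (jk k + 1) < q (k + 1) := by omega
      have h4 : q (k + 1) ≤ q k' := hqmono _ _ (by omega)
      have h5 := hjk2 k' (by omega)
      rw [← hje] at h5
      omega
  have hinj : Set.InjOn f (Finset.range n) := by
    intro k hk k' hk' hfe
    simp only [Finset.coe_range, Set.mem_Iio] at hk hk'
    rcases lt_trichotomy k k' with h | h | h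
    · exact absurd hfe (fun hfe => hstep k k' hk hk' h hfe)
    · exact h
    · exact absurd hfe.symm (fun hfe => hstep k' k hk' hk h hfe)
  -- conclude
  have hcard : (Finset.range n).card ≤ (Finset.range (2 * m - 1)).card := by
    apply Finset.card_le_card_of_injOn f _ hinj
    intro k hk
    simp only [Finset.mem_range, Finset.coe_range, Set.mem_Iio] at hk ⊢
    exact hfrange k hk
  simpa using hcard
end

section
/- Let R and S be strings over an alphabet Σ, let C_max be a maximal cover of S with respect to R, and let C = ((i_1,j_1),…,(i_m,j_m)) be an arbitrary cover of S with respect to R. Then for every block index 1 ≤ l ≤ m, at most two blocks of C_max have their start position in S lying within the span of the l-th block of C, i.e., at most two blocks of C_max start at a position p with p_l ≤ p ≤ p_l + (j_l − i_l), where p_l = 1 + Σ_{k<l}(j_k − i_k + 1). -/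
/-- The length of the block `(i, j)`, i.e. `j - i + 1`. -/
def blockLen (b : ℕ × ℕ) : ℕ := b.2 - b.1 + 1

/-- The (1-indexed) start position in `S` of the block of `C` with 0-based index `l`,
i.e. `p_{l+1} = 1 + Σ_{k ≤ l} (j_k - i_k + 1)` in 1-indexed notation. -/
def startPos (C : List (ℕ × ℕ)) (l : ℕ) : ℕ := 1 + ((C.take l).map blockLen).sum

lemma length_blockStr {σ : Type*} (R : List σ) (b : ℕ × ℕ)
    (h : 1 ≤ b.1 ∧ b.1 ≤ b.2 ∧ b.2 ≤ R.length) :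
    (blockStr R b).length = blockLen b := by
  simp only [blockStr, sub, blockLen, List.length_take, List.length_drop]
  omega

lemma flatten_len {σ : Type*} (R : List σ) (C : List (ℕ × ℕ))
    (hb : ∀ b ∈ C, 1 ≤ b.1 ∧ b.1 ≤ b.2 ∧ b.2 ≤ R.length) :
    ((C.map (blockStr R)).flatten).length = (C.map blockLen).sum := by
  rw [List.length_flatten, List.map_map]
  exact congrArg _ (List.map_congr_left fun b hbm => length_blockStr R b (hb b hbm))

lemma drop_cover {σ : Type*} (R S : List σ) (C : List (ℕ × ℕ)) (hC : IsCover R S C) (l : ℕ) :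
    S.drop (((C.take l).map blockLen).sum) = ((C.drop l).map (blockStr R)).flatten := by
  obtain ⟨hb, hS⟩ := hC
  have hsplit : C.map (blockStr R) = (C.take l).map (blockStr R) ++ (C.drop l).map (blockStr R) := by
    rw [← List.map_append, List.take_append_drop]
  have hlen : (((C.take l).map (blockStr R)).flatten).length = ((C.take l).map blockLen).sum :=
    flatten_len R _ (fun b hbm => hb b (List.mem_of_mem_take hbm))
  rw [hS, hsplit, List.flatten_append, ← hlen, List.drop_left]

lemma sum_take_mono (L : List ℕ) {k l : ℕ} (h : k ≤ l) :
    (L.take k).sum ≤ (L.take l).sum := by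
  have hkk : L.take k = (L.take l).take k := by
    rw [List.take_take, Nat.min_eq_left h]
  rw [hkk]
  exact (List.take_prefix k (L.take l)).sublist.sum_le_sum (fun a _ => Nat.zero_le a)

/-- At most two blocks of a maximal cover `C_max` start at a position lying within the
span of any single block of an arbitrary cover `C`. -/
theorem at_most_two_blocks_start_in_block {σ : Type*} (R S : List σ)
    (Cmax C : List (ℕ × ℕ))
    (hmax : IsCover R S Cmax) (hmaxmax : IsMaximal R Cmax)
    (hC : IsCover R S C) :
    ∀ l : ℕ, ∀ h : l < C.length,
      ((Finset.range Cmax.length).filter (fun l' =>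
          startPos C l ≤ startPos Cmax l' ∧
          startPos Cmax l' ≤ startPos C l + ((C[l]'h).2 - (C[l]'h).1))).card ≤ 2 := by
  intro l hl
  by_contra hcard
  push_neg at hcard
  set s := ((Finset.range Cmax.length).filter (fun l' =>
          startPos C l ≤ startPos Cmax l' ∧
          startPos Cmax l' ≤ startPos C l + ((C[l]'hl).2 - (C[l]'hl).1))) with hs
  have hsne : s.Nonempty := Finset.card_pos.mp (by omega)
  set a := s.min' hsne with hadef
  set c := s.max' hsne with hcdef
  have hsub : s ⊆ Finset.Icc a c := fun x hx =>
    Finset.mem_Icc.mpr ⟨Finset.min'_le _ _ hx, Finset.le_max' _ _ hx⟩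
  have hcard2 : s.card ≤ c + 1 - a := by
    simpa [Nat.card_Icc] using Finset.card_le_card hsub
  have hac : a + 2 ≤ c := by omega
  have ha := Finset.mem_filter.mp (s.min'_mem hsne)
  have hc := Finset.mem_filter.mp (s.max'_mem hsne)
  obtain ⟨haR', haLo, _⟩ := ha
  obtain ⟨hcR', _, hcHi⟩ := hc
  have haR := Finset.mem_range.mp haR'
  have hcR := Finset.mem_range.mp hcR'

  -- abbreviations
  have hlen2 : a + 1 < Cmax.length := by omega
  have hlen0 : a < Cmax.length := by omega
  have hbmax := hmax.1
  have hbC := hC.1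
  have hCl := hbC (C[l]'hl) (List.getElem_mem hl)
  have hma := hbmax (Cmax[a]'hlen0) (List.getElem_mem hlen0)
  have hma1 := hbmax (Cmax[a+1]'hlen2) (List.getElem_mem hlen2)
  set B := ((C.take l).map blockLen).sum with hB
  set e := blockLen (C[l]'hl) with he
  set A := ((Cmax.take a).map blockLen).sum with hA
  -- sums over Cmax prefixes
  have hBLlen : (Cmax.map blockLen).length = Cmax.length := by simp
  have hsum1 : ((Cmax.take (a+1)).map blockLen).sum
      = A + blockLen (Cmax[a]'hlen0) := by
    rw [hA, List.map_take, List.map_take, List.sum_take_succ _ a (by omega)]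
    simp
  have hsum2 : ((Cmax.take (a+2)).map blockLen).sum
      = A + blockLen (Cmax[a]'hlen0) + blockLen (Cmax[a+1]'hlen2) := by
    rw [List.map_take, List.sum_take_succ _ (a+1) (by omega), ← List.map_take, hsum1]
    simp
  have hmono : ((Cmax.take (a+2)).map blockLen).sum ≤ ((Cmax.take c).map blockLen).sum := by
    rw [List.map_take, List.map_take]
    exact sum_take_mono _ hac
  -- numeric facts
  have hBA : B ≤ A := by
    have := haLo
    simp only [← hadef, startPos, ← hB, ← hA] at this
    omega
  have hce : ((Cmax.take c).map blockLen).sum ≤ B + ((C[l]'hl).2 - (C[l]'hl).1) := by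
    have := hcHi
    simp only [← hcdef, startPos, ← hB] at this
    omega
  have hetop : (C[l]'hl).2 - (C[l]'hl).1 = e - 1 ∧ 1 ≤ e := by
    constructor <;> simp [he, blockLen]
  -- string equalities
  have hdropA := drop_cover R S Cmax hmax a
  have hdropB := drop_cover R S C hC l
  set T := blockStr R (Cmax[a]'hlen0) ++ blockStr R (Cmax[a+1]'hlen2) with hT
  have hTlen : T.length = blockLen (Cmax[a]'hlen0) + blockLen (Cmax[a+1]'hlen2) := by
    rw [hT, List.length_append, length_blockStr R _ hma, length_blockStr R _ hma1]
  have hSA : S.drop A = T ++ ((Cmax.drop (a+2)).map (blockStr R)).flatten := by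
    rw [← hA] at hdropA
    rw [hdropA, List.drop_eq_getElem_cons hlen0, List.drop_eq_getElem_cons hlen2,
      List.map_cons, List.map_cons, List.flatten_cons, List.flatten_cons, hT,
      List.append_assoc]
  have hTake : (S.drop A).take T.length = T := by
    rw [hSA, List.take_left' rfl]
  have hSB : S.drop B = blockStr R (C[l]'hl) ++ ((C.drop (l+1)).map (blockStr R)).flatten := by
    rw [← hB] at hdropB
    rw [hdropB, List.drop_eq_getElem_cons hl, List.map_cons, List.flatten_cons]
  have hBtake : (S.drop B).take e = blockStr R (C[l]'hl) := by
    rw [hSB, List.take_left' (length_blockStr R _ hCl)]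
  -- T is an infix of blockStr R C[l]
  have hkey : A - B + T.length ≤ e := by
    rw [hTlen]; omega
  have hTeq : T = ((blockStr R (C[l]'hl)).drop (A - B)).take T.length := by
    rw [← hBtake, List.drop_take, List.drop_drop, Nat.add_sub_cancel' hBA,
      List.take_take, Nat.min_eq_left (by omega), hTake]
  have hTinfR : T <:+: R := by
    have h1 : ((blockStr R (C[l]'hl)).drop (A - B)).take T.length <:+: blockStr R (C[l]'hl) :=
      (List.take_prefix _ _).isInfix.trans (List.drop_suffix _ _).isInfix
    have h2 : blockStr R (C[l]'hl) <:+: R := by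
      rw [blockStr, sub]
      exact (List.take_prefix _ _).isInfix.trans (List.drop_suffix _ _).isInfix
    rw [hTeq]
    exact h1.trans h2
  obtain ⟨u, v, huv⟩ := hTinfR
  exact hmaxmax a hlen2 ⟨u, v, huv.symm⟩
end

section
/- Let R and S be strings over an alphabet Σ, let C_max be a maximal cover of S with respect to R, and let C = ((i_1,j_1),…,(i_m,j_m)) be an arbitrary cover of S with respect to R. Then at most one block of C_max has its start position in S lying within the span of the last block of C, i.e., at most one block of C_max starts at a position p with p_m ≤ p ≤ |S|, where p_m = 1 + Σ_{k<m}(j_k − i_k + 1). -/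
lemma blockStr_infix {σ : Type*} (R : List σ) (b : ℕ × ℕ) : blockStr R b <:+: R :=
  ((List.take_prefix _ _).isInfix).trans (List.drop_suffix (b.1-1) R).isInfix

lemma len_blockStr {σ : Type*} (R : List σ) (b : ℕ × ℕ)
    (hb : 1 ≤ b.1 ∧ b.1 ≤ b.2 ∧ b.2 ≤ R.length) : (blockStr R b).length = blockLen b := by
  simp [blockStr, sub, blockLen]
  omega

lemma cover_drop {σ : Type*} (R S : List σ) (C : List (ℕ × ℕ))
    (h : IsCover R S C) (l : ℕ) :
    S.drop (startPos C l - 1) = ((C.drop l).map (blockStr R)).flatten := by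
  obtain ⟨hb, hS⟩ := h
  have hlen : (((C.take l).map (blockStr R)).flatten).length = startPos C l - 1 := by
    rw [List.length_flatten, List.map_map, startPos]
    have : ∀ b ∈ C.take l, (List.length ∘ blockStr R) b = blockLen b := by
      intro b hbm
      exact len_blockStr R b (hb b (List.mem_of_mem_take hbm))
    rw [List.map_congr_left this]
    omega
  have hsplit : (List.map (blockStr R) C).flatten =
      (List.map (blockStr R) (C.take l)).flatten ++ (List.map (blockStr R) (C.drop l)).flatten := by
    rw [← List.flatten_append, ← List.map_append, List.take_append_drop]
  rw [hS, hsplit, ← hlen, List.drop_left]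

lemma startPos_one_le (C : List (ℕ × ℕ)) (l : ℕ) : 1 ≤ startPos C l :=
  Nat.le_add_right 1 _

lemma startPos_mono_key {σ : Type*} (R S : List σ) (Cmax C : List (ℕ × ℕ))
    (hmax : IsCover R S Cmax)
    (hmaxmax : ∀ l : ℕ, ∀ h : l + 1 < Cmax.length,
      ¬ IsSubstring (blockStr R (Cmax[l]'(by omega)) ++ blockStr R (Cmax[l + 1]'h)) R)
    (hC : IsCover R S C) (hne : C ≠ [])
    (l1 l2 : ℕ) (h12 : l1 < l2) (h2 : l2 < Cmax.length)
    (hp1 : startPos C (C.length - 1) ≤ startPos Cmax l1) : False := by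
  set m := C.length - 1 with hmdef
  have hm : m < C.length := by
    have := List.length_pos_iff.mpr hne; omega
  have hlast : S.drop (startPos C m - 1) = blockStr R (C[m]) := by
    rw [cover_drop R S C hC m]
    have hd : C.drop m = [C[m]] := by
      rw [List.drop_eq_getElem_cons hm, List.drop_eq_nil_of_le (by omega)]
    rw [hd]; simp
  have hdrop : S.drop (startPos Cmax l1 - 1) =
      blockStr R (Cmax[l1]'(by omega)) ++ (blockStr R (Cmax[l1+1]'(by omega)) ++
        ((Cmax.drop (l1+2)).map (blockStr R)).flatten) := by
    rw [cover_drop R S Cmax hmax l1, List.drop_eq_getElem_cons (by omega : l1 < Cmax.length),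
      List.drop_eq_getElem_cons (by omega : l1+1 < Cmax.length),
      List.map_cons, List.map_cons, List.flatten_cons, List.flatten_cons]
  have hpre : blockStr R (Cmax[l1]'(by omega)) ++ blockStr R (Cmax[l1+1]'(by omega))
      <+: S.drop (startPos Cmax l1 - 1) := by
    rw [hdrop]
    exact ⟨((Cmax.drop (l1+2)).map (blockStr R)).flatten, by simp⟩
  have h1m := startPos_one_le C m
  have hsuf : S.drop (startPos Cmax l1 - 1) =
      (S.drop (startPos C m - 1)).drop (startPos Cmax l1 - startPos C m) := by
    rw [List.drop_drop]
    congr 1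
    omega
  have hinf : blockStr R (Cmax[l1]'(by omega)) ++ blockStr R (Cmax[l1+1]'(by omega)) <:+: R := by
    have h1 : blockStr R (Cmax[l1]'(by omega)) ++ blockStr R (Cmax[l1+1]'(by omega))
        <:+: blockStr R (C[m]) := by
      rw [hsuf, hlast] at hpre
      exact hpre.isInfix.trans (List.drop_suffix _ _).isInfix
    exact h1.trans (blockStr_infix R _)
  obtain ⟨u, v, huv⟩ := hinf
  exact hmaxmax l1 (by omega) ⟨u, v, huv.symm⟩

theorem at_most_one_block_starts_in_last_block' {σ : Type*} (R S : List σ)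
    (Cmax C : List (ℕ × ℕ))
    (hmax : IsCover R S Cmax)
    (hmaxmax : ∀ l : ℕ, ∀ h : l + 1 < Cmax.length,
      ¬ IsSubstring (blockStr R (Cmax[l]'(by omega)) ++ blockStr R (Cmax[l + 1]'h)) R)
    (hC : IsCover R S C) (hne : C ≠ []) :
    ((Finset.range Cmax.length).filter (fun l' =>
        startPos C (C.length - 1) ≤ startPos Cmax l' ∧
        startPos Cmax l' ≤ S.length)).card ≤ 1 := by
  rw [Finset.card_le_one]
  intro a ha b hb
  simp only [Finset.mem_filter, Finset.mem_range] at ha hb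
  by_contra hab
  rcases Nat.lt_or_ge a b with h | h
  · exact startPos_mono_key R S Cmax C hmax hmaxmax hC hne a b h hb.1 ha.2.1
  · exact startPos_mono_key R S Cmax C hmax hmaxmax hC hne b a (by omega) ha.1 hb.2.1

/-- At most one block of a maximal cover `C_max` starts at a position lying within the
span of the last block of an arbitrary cover `C` (that span ends at position `|S|`). -/
theorem at_most_one_block_starts_in_last_block {σ : Type*} (R S : List σ)
    (Cmax C : List (ℕ × ℕ))
    (hmax : IsCover R S Cmax) (hmaxmax : IsMaximal R Cmax)
    (hC : IsCover R S C) (hne : C ≠ []) :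
    ((Finset.range Cmax.length).filter (fun l' =>
        startPos C (C.length - 1) ≤ startPos Cmax l' ∧
        startPos Cmax l' ≤ S.length)).card ≤ 1 :=
  at_most_one_block_starts_in_last_block' R S Cmax C hmax hmaxmax hC hne
end

section
/- Let R and S be strings over an alphabet Σ such that S admits a cover with respect to R, and let n be the minimum size of a cover of S with respect to R. Then every maximal cover C_max of S with respect to R satisfies |C_max| ≤ 2n − 1. -/
section Aux

variable {σ : Type*}

lemma isSubstring_iff_infix (x R : List σ) : IsSubstring x R ↔ x <:+: R :=
  ⟨fun ⟨u, v, h⟩ => ⟨u, v, h.symm⟩, fun ⟨u, v, h⟩ => ⟨u, v, h.symm⟩⟩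

lemma blockStr_isSubstring (R : List σ) (b : ℕ × ℕ) : IsSubstring (blockStr R b) R := by
  rw [isSubstring_iff_infix]
  exact ((List.take_prefix _ _).isInfix).trans (List.drop_suffix _ _).isInfix

lemma blockStr_ne_nil (R : List σ) (b : ℕ × ℕ)
    (hb : 1 ≤ b.1 ∧ b.1 ≤ b.2 ∧ b.2 ≤ R.length) : blockStr R b ≠ [] := by
  have hlen : (blockStr R b).length ≠ 0 := by
    simp only [blockStr, sub, List.length_take, List.length_drop]
    omega
  exact fun h => hlen (by simp [h])

/-- position of the `l`-th boundary in the flattening of `L`. -/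
def posL (L : List (List σ)) (l : ℕ) : ℕ := ((L.take l).flatten).length

lemma posL_succ (L : List (List σ)) (l : ℕ) :
    posL L (l+1) = posL L l + (L[l]?.toList.flatten).length := by
  simp [posL, List.take_succ]

lemma posL_succ_of_lt (L : List (List σ)) (l : ℕ) (h : l < L.length) :
    posL L (l+1) = posL L l + (L[l]).length := by
  rw [posL_succ]
  simp [List.getElem?_eq_getElem h]

lemma posL_mono (L : List (List σ)) : Monotone (posL L) := by
  apply monotone_nat_of_le_succ
  intro l
  rw [posL_succ]
  omega

lemma lt_of_posL_lt (L : List (List σ)) {a b : ℕ} (h : posL L a < posL L b) : a < b := by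
  by_contra h'
  exact absurd (posL_mono L (Nat.le_of_not_lt h')) (Nat.not_le_of_lt h)

lemma posL_lt (L : List (List σ)) (hne : ∀ x ∈ L, x ≠ []) {a b : ℕ}
    (hab : a < b) (hb : b ≤ L.length) : posL L a < posL L b := by
  induction b with
  | zero => omega
  | succ b ih =>
    have hbl : b < L.length := by omega
    have h1 : 1 ≤ L[b].length := List.length_pos_iff.mpr (hne _ (List.getElem_mem hbl))
    rcases Nat.lt_or_ge a b with h | h
    · have := ih h (by omega)
      rw [posL_succ_of_lt _ _ hbl]
      omega
    · have hab' : a = b := by omega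
      subst hab'
      rw [posL_succ_of_lt _ _ hbl]
      omega

lemma posL_add (L : List (List σ)) (l : ℕ) :
    posL L l + ((L.drop l).flatten).length = L.flatten.length := by
  rw [posL, ← List.length_append, ← List.flatten_append, List.take_append_drop]

lemma drop_posL (L : List (List σ)) (l : ℕ) :
    L.flatten.drop (posL L l) = (L.drop l).flatten := by
  induction l generalizing L with
  | zero => simp [posL]
  | succ l ih =>
    cases L with
    | nil => simp [posL]
    | cons a L =>
      have hp : posL (a :: L) (l+1) = a.length + posL L l := by
        simp [posL, List.length_append]
      rw [hp, List.flatten_cons, ← List.drop_drop, List.drop_left]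
      · exact ih L

lemma seg_single (L : List (List σ)) (k : ℕ) (h : k < L.length) :
    (L.flatten.drop (posL L k)).take (posL L (k+1) - posL L k) = L[k] := by
  rw [drop_posL, posL_succ_of_lt _ _ h, Nat.add_sub_cancel_left,
    List.drop_eq_getElem_cons h, List.flatten_cons, List.take_left]

lemma seg_pair (L : List (List σ)) (l : ℕ) (h : l + 1 < L.length) :
    (L.flatten.drop (posL L l)).take (posL L (l+2) - posL L l) = L[l] ++ (L[l+1]'h) := by
  have h1 : l < L.length := by omega
  rw [drop_posL, posL_succ_of_lt _ _ h, posL_succ_of_lt _ _ h1,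
    List.drop_eq_getElem_cons h1, List.drop_eq_getElem_cons h]
  simp only [List.flatten_cons, ← List.append_assoc]
  rw [List.take_left' (by simp [List.length_append]; omega)]

lemma seg_infix (S : List σ) {a b c d : ℕ} (hca : c ≤ a) (hbd : b ≤ d) :
    (S.drop a).take (b - a) <:+: (S.drop c).take (d - c) := by
  have key : (((S.drop c).take (d - c)).drop (a - c)).take (b - a)
      = (S.drop a).take (b - a) := by
    rw [List.drop_take, List.drop_drop, List.take_take]
    have e1 : c + (a - c) = a := by omega
    have e2 : min (b - a) (d - c - (a - c)) = b - a := by omega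
    rw [e1, e2]
  rw [← key]
  exact (List.take_prefix _ _).isInfix.trans (List.drop_suffix _ _).isInfix

end Aux

/-- If `n` is the minimum size of a cover of `S` w.r.t. `R`, then every maximal
cover `C_max` of `S` w.r.t. `R` satisfies `|C_max| ≤ 2n - 1`. -/
theorem maximal_cover_le_twice_opt {σ : Type*} (R S : List σ) (n : ℕ)
    (hopt : ∃ C, IsCover R S C ∧ C.length = n)
    (hmin : ∀ C, IsCover R S C → n ≤ C.length) :
    ∀ Cmax, IsCover R S Cmax → IsMaximal R Cmax → Cmax.length ≤ 2 * n - 1 := by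
  intro Cmax hcmax hmax
  obtain ⟨Copt, hcopt, hn⟩ := hopt
  subst hn
  set P := Cmax.map (blockStr R) with hP
  set Q := Copt.map (blockStr R) with hQ
  have hSP : S = P.flatten := hcmax.2
  have hSQ : S = Q.flatten := hcopt.2
  have hPne : ∀ x ∈ P, x ≠ [] := by
    intro x hx
    rw [hP, List.mem_map] at hx
    obtain ⟨b, hb, rfl⟩ := hx
    exact blockStr_ne_nil R b (hcmax.1 b hb)
  have hQne : ∀ x ∈ Q, x ≠ [] := by
    intro x hx
    rw [hQ, List.mem_map] at hx
    obtain ⟨b, hb, rfl⟩ := hx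
    exact blockStr_ne_nil R b (hcopt.1 b hb)
  have hPlen : P.length = Cmax.length := by simp [hP]
  have hQlen : Q.length = Copt.length := by simp [hQ]
  have hQn : posL Q Copt.length = S.length := by
    rw [← hQlen, posL, List.take_length, hSQ]
  -- if Cmax is nonempty then so is Copt
  have hn1 : 1 ≤ Cmax.length → 1 ≤ Copt.length := by
    intro h1
    by_contra h0
    have hc0 : Copt = [] := List.length_eq_zero_iff.mp (by omega)
    have hS0 : S.length = 0 := by simp [hSQ, hQ, hc0]
    have h3 : posL P 0 < posL P P.length := posL_lt P hPne (by omega) (le_refl _)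
    have h4 : P.flatten.length = S.length := by rw [hSP]
    simp only [posL, List.take_zero, List.flatten_nil, List.length_nil, List.take_length] at h3
    omega
  -- the key window lemma
  have hwin : ∀ l : ℕ, ∃ k : ℕ, l + 2 ≤ Cmax.length →
      1 ≤ k ∧ k + 1 ≤ Copt.length ∧ posL P l < posL Q k ∧ posL Q k < posL P (l+2) := by
    intro l
    by_cases hl : l + 2 ≤ Cmax.length
    swap
    · exact ⟨0, fun h => absurd h hl⟩
    have hn1' : 1 ≤ Copt.length := hn1 (by omega)
    have hPl2 : posL P l < posL P (l+2) := posL_lt P hPne (by omega) (by omega)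
    have hPtop : posL P (l+2) ≤ S.length := by
      have h := posL_add P (l+2)
      rw [← hSP] at h
      omega
    have hex : ∃ k, posL P l < posL Q (k+1) :=
      ⟨Copt.length - 1, by rw [Nat.sub_add_cancel hn1', hQn]; omega⟩
    set k0 := Nat.find hex with hk0def
    have hk0 : posL P l < posL Q (k0 + 1) := Nat.find_spec hex
    have hk0le : k0 ≤ Copt.length - 1 :=
      Nat.find_min' hex (by rw [Nat.sub_add_cancel hn1', hQn]; omega)
    have hk0lo : posL Q k0 ≤ posL P l := by
      rcases Nat.eq_zero_or_pos k0 with h | h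
      · rw [h]; simp [posL]
      · have hmin' := Nat.find_min hex (show k0 - 1 < k0 by omega)
        rw [Nat.sub_add_cancel h] at hmin'
        omega
    by_cases hkin : posL Q (k0+1) < posL P (l+2)
    · refine ⟨k0+1, fun _ => ⟨by omega, ?_, hk0, hkin⟩⟩
      have hlt : posL Q (k0+1) < posL Q Copt.length := by rw [hQn]; omega
      have := lt_of_posL_lt Q hlt
      omega
    · exfalso
      push_neg at hkin
      have hk0lt : k0 < Copt.length := by omega
      have hk0Q : k0 < Q.length := by omega
      have hl1 : l + 1 < P.length := by omega
      have hlC : l + 1 < Cmax.length := by omega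
      apply hmax l hlC
      rw [isSubstring_iff_infix]
      have epair : blockStr R (Cmax[l]'(by omega)) ++ blockStr R (Cmax[l+1]'hlC)
          = (S.drop (posL P l)).take (posL P (l+2) - posL P l) := by
        rw [hSP, seg_pair P l hl1]
        congr 1 <;> simp [hP]
      have eblk : blockStr R (Copt[k0]'hk0lt)
          = (S.drop (posL Q k0)).take (posL Q (k0+1) - posL Q k0) := by
        rw [hSQ, seg_single Q k0 hk0Q]
        simp [hQ]
      have h1 := seg_infix S hk0lo hkin
      rw [← eblk, ← epair] at h1
      exact h1.trans ((isSubstring_iff_infix _ _).mp (blockStr_isSubstring R _))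
  choose K hK using hwin
  have hmono : ∀ t : ℕ, 2*t + 2 ≤ Cmax.length → t + 1 ≤ K (2*t) := by
    intro t
    induction t with
    | zero => intro h; simpa using (hK 0 (by omega)).1
    | succ t ih =>
      intro h
      have h1 := hK (2*t) (by omega)
      have h2 := hK (2*t+2) (by omega)
      have hlt : posL Q (K (2*t)) < posL Q (K (2*t+2)) :=
        lt_trans h1.2.2.2 h2.2.2.1
      have hKK := lt_of_posL_lt Q hlt
      have := ih (by omega)
      have e : 2*(t+1) = 2*t+2 := by ring
      rw [e]
      omega
  rcases Nat.lt_or_ge Cmax.length 2 with h2 | h2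
  · rcases Nat.eq_zero_or_pos Cmax.length with h0 | h0
    · omega
    · have := hn1 (by omega); omega
  · have hle : 2*((Cmax.length - 2)/2) + 2 ≤ Cmax.length := by omega
    have ha := hmono ((Cmax.length - 2)/2) hle
    have hb := (hK (2*((Cmax.length - 2)/2)) hle).2.1
    omega
end

section
/- Let R be a string of length r ≥ 1 over a linearly ordered alphabet Σ. The r nonempty suffixes of R (the suffix starting at position k, for 1 ≤ k ≤ r) are pairwise distinct; let rank(k) ∈ {1,…,r} denote the position of the suffix starting at k in the lexicographically sorted list of these suffixes. Then for every string y, the set { rank(k) : 1 ≤ k ≤ r and y is a prefix of the suffix of R starting at position k } is a set of consecutive integers (an interval). -/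
private lemma list_cons_le_cons_iff {σ : Type*} [LinearOrder σ] (x : σ) (l l' : List σ) :
    x :: l ≤ x :: l' ↔ l ≤ l' := by
  constructor
  · intro h
    rcases h.lt_or_eq with h | h
    · have h' : List.Lex (· < ·) (x :: l) (x :: l') := h
      cases h' with
      | cons h => exact le_of_lt h
      | rel h => exact absurd h (lt_irrefl x)
    · simp_all
  · exact List.cons_le_cons x

private lemma list_head_le {σ : Type*} [LinearOrder σ] {x z : σ} {l l' : List σ}
    (h : x :: l ≤ z :: l') : x ≤ z := by
  rcases h.lt_or_eq with h | h
  · exact List.head_le_of_lt h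
  · simp_all

private lemma list_not_cons_le_nil {σ : Type*} [LinearOrder σ] (x : σ) (l : List σ) :
    ¬ (x :: l ≤ ([] : List σ)) := by
  intro h
  rcases h.lt_or_eq with h | h
  · exact List.not_lt_nil _ h
  · simp at h

private lemma prefix_between {σ : Type*} [LinearOrder σ] :
    ∀ (y a b c : List σ), y <+: a → y <+: c → a ≤ b → b ≤ c → y <+: b
  | [], _, _, _, _, _, _, _ => List.nil_prefix
  | x :: y', a, b, c, ha, hc, hab, hbc => by
    match a, c with
    | [], _ => exact absurd ha (by simp)
    | _, [] => exact absurd hc (by simp)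
    | xa :: a0, xc :: c0 =>
      rw [List.cons_prefix_cons] at ha hc
      obtain ⟨rfl, ha0⟩ := ha
      obtain ⟨rfl, hc0⟩ := hc
      match b with
      | [] => exact absurd hab (list_not_cons_le_nil _ _)
      | z :: b0 =>
        have hxz : x = z := le_antisymm (list_head_le hab) (list_head_le hbc)
        subst hxz
        rw [list_cons_le_cons_iff] at hab hbc
        rw [List.cons_prefix_cons]
        exact ⟨rfl, prefix_between y' a0 b0 c0 ha0 hc0 hab hbc⟩

/-- Let `R` be a nonempty string over a linearly ordered alphabet. Its nonempty suffixes
(the suffix starting at 1-indexed position `k` is `R.drop (k-1)`) are pairwise distinct.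
Moreover, for any ranking `rank` of the starting positions that sorts the suffixes
lexicographically (a bijection of `{1,…,r}` such that `rank k ≤ rank k'` iff the suffix
at `k` is lexicographically at most the suffix at `k'`), and for any string `y`, the set
of ranks of suffixes having `y` as a prefix is a set of consecutive integers. -/
theorem ranks_of_suffixes_with_prefix_form_interval {σ : Type*} [LinearOrder σ]
    (R : List σ) (hr : 1 ≤ R.length)
    (rank : ℕ → ℕ)
    (hbij : Set.BijOn rank (Set.Icc 1 R.length) (Set.Icc 1 R.length))
    (hord : ∀ k ∈ Set.Icc 1 R.length, ∀ k' ∈ Set.Icc 1 R.length,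
      (rank k ≤ rank k' ↔ R.drop (k - 1) ≤ R.drop (k' - 1)))
    (y : List σ) :
    (∀ k ∈ Set.Icc 1 R.length, ∀ k' ∈ Set.Icc 1 R.length,
      R.drop (k - 1) = R.drop (k' - 1) → k = k') ∧
    (∀ p q t : ℕ,
      p ∈ {q' | ∃ k ∈ Set.Icc 1 R.length, y <+: R.drop (k - 1) ∧ q' = rank k} →
      t ∈ {q' | ∃ k ∈ Set.Icc 1 R.length, y <+: R.drop (k - 1) ∧ q' = rank k} →
      p ≤ q → q ≤ t →
      q ∈ {q' | ∃ k ∈ Set.Icc 1 R.length, y <+: R.drop (k - 1) ∧ q' = rank k}) := by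
  constructor
  · intro k hk k' hk' heq
    have := congrArg List.length heq
    simp only [List.length_drop] at this
    simp only [Set.mem_Icc] at hk hk'
    omega
  · rintro p q t ⟨kp, hkp, hyp, rfl⟩ ⟨kt, hkt, hyt, rfl⟩ hpq hqt
    have hqmem : q ∈ Set.Icc 1 R.length := by
      have h1 := hbij.mapsTo hkp
      have h2 := hbij.mapsTo hkt
      simp only [Set.mem_Icc] at h1 h2 ⊢
      omega
    obtain ⟨k, hk, rfl⟩ := hbij.surjOn hqmem
    refine ⟨k, hk, ?_, rfl⟩
    have h1 : R.drop (kp - 1) ≤ R.drop (k - 1) := (hord kp hkp k hk).mp hpq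
    have h2 : R.drop (k - 1) ≤ R.drop (kt - 1) := (hord k hk kt hkt).mp hqt
    exact prefix_between y _ _ _ hyp hyt h1 h2
end

section
/- Let R and S be strings over an alphabet Σ, let C be a cover of S with respect to R of size m, and let 1 ≤ j < |S|. Then there exist a cover C1 of the prefix S[1..j] with respect to R and a cover C2 of the suffix S[j+1..|S|] with respect to R such that |C1| + |C2| ≤ m + 1. -/
lemma blockStr_length {σ : Type*} (R : List σ) (b : ℕ × ℕ)
    (h : 1 ≤ b.1 ∧ b.1 ≤ b.2 ∧ b.2 ≤ R.length) :
    (blockStr R b).length = b.2 - b.1 + 1 := by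
  simp only [blockStr, sub, List.length_take, List.length_drop]
  omega

/-- If `S` has a cover of size `m` w.r.t. `R` and `1 ≤ j < |S|`, then the prefix
`S[1..j]` and the suffix `S[j+1..|S|]` have covers `C1`, `C2` with
`|C1| + |C2| ≤ m + 1`. -/
theorem split_cover {σ : Type*} (R S : List σ) (C : List (ℕ × ℕ))
    (hC : IsCover R S C) (j : ℕ) (hj1 : 1 ≤ j) (hj2 : j < S.length) :
    ∃ C1 C2 : List (ℕ × ℕ),
      IsCover R (S.take j) C1 ∧ IsCover R (S.drop j) C2 ∧
      C1.length + C2.length ≤ C.length + 1 := by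
  induction C generalizing S j with
  | nil =>
    obtain ⟨-, hS⟩ := hC
    simp at hS
    subst hS
    simp at hj2
  | cons c cs ih =>
    obtain ⟨hval, hS⟩ := hC
    have hc := hval c (by simp)
    have hL : (blockStr R c).length = c.2 - c.1 + 1 := blockStr_length R c hc
    have hSsplit : S = blockStr R c ++ (cs.map (blockStr R)).flatten := by
      simpa using hS
    set rest := (cs.map (blockStr R)).flatten with hrest
    rcases lt_trichotomy j (blockStr R c).length with h | h | h
    · -- split the first block
      rw [hL] at h
      refine ⟨[(c.1, c.1 + j - 1)], (c.1 + j, c.2) :: cs, ⟨?_, ?_⟩, ⟨?_, ?_⟩, by simp; omega⟩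
      · intro b hb
        simp at hb
        subst hb
        simp only
        omega
      · rw [hSsplit, List.take_append_of_le_length (by omega)]
        simp only [blockStr, sub, List.map_cons, List.map_nil, List.flatten_cons,
          List.flatten_nil, List.append_nil, List.take_take]
        congr 1
        omega
      · intro b hb
        rcases List.mem_cons.mp hb with hb | hb
        · subst hb; simp only; omega
        · exact hval b (List.mem_cons_of_mem _ hb)
      · rw [hSsplit, List.drop_append_of_le_length (by omega)]
        have e1 : c.1 - 1 + j = c.1 + j - 1 := by omega
        have e2 : c.2 - c.1 + 1 - j = c.2 - (c.1 + j) + 1 := by omega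
        simp only [blockStr, sub, List.map_cons, List.flatten_cons, List.drop_take,
          List.drop_drop, e1, e2, hrest]
    · -- split exactly at the boundary
      refine ⟨[c], cs, ⟨?_, ?_⟩, ⟨?_, ?_⟩, by simp; omega⟩
      · intro b hb; simp at hb; subst hb; exact hc
      · rw [hSsplit, h, List.take_append_of_le_length le_rfl, List.take_length]
        simp
      · intro b hb; exact hval b (List.mem_cons_of_mem _ hb)
      · rw [hSsplit, h, List.drop_append_of_le_length le_rfl, List.drop_length]
        simp [hrest]
    · -- recurse into the tail
      have hrl : j - (blockStr R c).length < rest.length := by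
        have : S.length = (blockStr R c).length + rest.length := by
          rw [hSsplit, List.length_append]
        omega
      obtain ⟨C1, C2, ⟨h1v, h1s⟩, h2, hlen⟩ :=
        ih rest ⟨fun b hb => hval b (List.mem_cons_of_mem _ hb), rfl⟩
          (j - (blockStr R c).length) (by omega) hrl
      refine ⟨c :: C1, C2, ⟨?_, ?_⟩, ?_, by simp; omega⟩
      · intro b hb
        rcases List.mem_cons.mp hb with hb | hb
        · subst hb; exact hc
        · exact h1v b hb
      · rw [hSsplit, List.take_append,
          List.take_of_length_le (by omega)]
        simp [h1s]
      · have : S.drop j = rest.drop (j - (blockStr R c).length) := by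
          rw [hSsplit, List.drop_append,
            List.drop_eq_nil_of_le (by omega), List.nil_append]
        rw [this]; exact h2
end

section
/- Let R and S be strings over an alphabet Σ with |S| ≥ 2, let C be a cover of S with respect to R of size m, and let 1 ≤ i ≤ |S|. Then the string obtained from S by deleting its i-th character has a cover with respect to R of size at most m + 1. -/
lemma sub_length {σ : Type*} (R : List σ) (p q : ℕ) (h1 : 1 ≤ p) (h2 : p ≤ q)
    (h3 : q ≤ R.length) : (sub R p q).length = q - p + 1 := by
  simp [sub]; omega

lemma sub_take {σ : Type*} (R : List σ) (p q k : ℕ) (hk : 1 ≤ k) (hkq : k ≤ q - p + 1) :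
    (sub R p q).take k = sub R p (p + k - 1) := by
  rw [sub, sub, List.take_take]
  congr 1
  omega

lemma sub_drop {σ : Type*} (R : List σ) (p q k : ℕ) (hp : 1 ≤ p) (hk : k ≤ q - p) :
    (sub R p q).drop k = sub R (p + k) q := by
  rw [sub, sub, List.drop_take, List.drop_drop,
    show p - 1 + k = p + k - 1 by omega, show q - p + 1 - k = q - (p+k) + 1 by omega]

lemma main_lemma {σ : Type*} (R : List σ) (C : List (ℕ × ℕ))
    (hv : ∀ b ∈ C, 1 ≤ b.1 ∧ b.1 ≤ b.2 ∧ b.2 ≤ R.length) :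
    ∀ i, 1 ≤ i → i ≤ ((C.map (blockStr R)).flatten).length →
    ∃ C' : List (ℕ × ℕ), (∀ b ∈ C', 1 ≤ b.1 ∧ b.1 ≤ b.2 ∧ b.2 ≤ R.length) ∧
      (C'.map (blockStr R)).flatten =
        ((C.map (blockStr R)).flatten).take (i-1) ++ ((C.map (blockStr R)).flatten).drop i ∧
      C'.length ≤ C.length + 1 := by
  induction C with
  | nil => intro i h1 h2; simp at h2; omega
  | cons b C ih =>
    intro i h1 h2
    obtain ⟨p, q⟩ := b
    obtain ⟨hp1, hpq, hqR⟩ := hv (p, q) List.mem_cons_self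
    have hvC : ∀ b ∈ C, 1 ≤ b.1 ∧ b.1 ≤ b.2 ∧ b.2 ≤ R.length :=
      fun b hb => hv b (List.mem_cons_of_mem _ hb)
    set t := blockStr R (p, q) with ht_def
    set rest := (C.map (blockStr R)).flatten with hrest_def
    have hflat : (((p,q) :: C).map (blockStr R)).flatten = t ++ rest := by
      simp [ht_def, hrest_def]
    have htlen : t.length = q - p + 1 := sub_length R p q hp1 hpq hqR
    clear_value t rest
    by_cases hiL : i ≤ q - p + 1
    · -- delete within the first block
      refine ⟨((if 2 ≤ i then [(p, p+i-2)] else []) ++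
               (if i ≤ q - p then [(p+i, q)] else [])) ++ C, ?_, ?_, ?_⟩
      · intro b hb
        simp only [List.mem_append, List.mem_cons] at hb
        rcases hb with (hb | hb) | hb
        · split_ifs at hb with h
          · simp at hb; subst hb; simp; omega
          · simp at hb
        · split_ifs at hb with h
          · simp at hb; subst hb; simp; omega
          · simp at hb
        · exact hvC b hb
      · rw [hflat, List.take_append_of_le_length (by omega),
          List.drop_append_of_le_length (by omega)]
        have hpieces : t.take (i-1) ++ t.drop i =
            ((if 2 ≤ i then [(p, p+i-2)] else []).map (blockStr R)).flatten ++
            ((if i ≤ q - p then [(p+i, q)] else []).map (blockStr R)).flatten := by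
          split_ifs with h1' h2' h2'
          · have e1 : t.take (i-1) = sub R p (p + i - 2) := by
              rw [ht_def, blockStr, sub_take R p q (i-1) (by omega) (by omega)]
              congr 1; omega
            have e2 : t.drop i = sub R (p+i) q := by
              rw [ht_def, blockStr, sub_drop R p q i hp1 (by omega)]
            simp [e1, e2, blockStr]
          · have e1 : t.take (i-1) = sub R p (p + i - 2) := by
              rw [ht_def, blockStr, sub_take R p q (i-1) (by omega) (by omega)]
              congr 1; omega
            have e2 : t.drop i = [] := by
              apply List.drop_eq_nil_of_le; omega
            simp [e1, e2, blockStr]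
          · have hi1 : i = 1 := by omega
            have e2 : t.drop i = sub R (p+i) q := by
              rw [ht_def, blockStr, sub_drop R p q i hp1 (by omega)]
            simp [hi1] at e2 ⊢
            simp [e2, blockStr]
          · have e2 : t.drop i = [] := by
              apply List.drop_eq_nil_of_le; omega
            have hi1 : i = 1 := by omega
            have e2' : t.tail = [] := by rw [← List.drop_one, ← hi1]; exact e2
            simp [hi1, e2']
        simp only [List.map_append, List.flatten_append] at *
        rw [← List.append_assoc, ← hpieces, List.append_assoc]
        simp [hrest_def]
      · simp only [List.length_append, List.length_cons]
        split_ifs <;> simp <;> omega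
    · -- recurse into the rest
      rw [hflat] at h2
      simp only [List.length_append] at h2
      obtain ⟨D, hD1, hD2, hD3⟩ := ih hvC (i - t.length) (by omega) (by omega)
      refine ⟨(p, q) :: D, ?_, ?_, ?_⟩
      · intro b hb
        rcases List.mem_cons.mp hb with rfl | hb
        · exact ⟨hp1, hpq, hqR⟩
        · exact hD1 b hb
      · rw [hflat]
        have e1 : (t ++ rest).take (i-1) = t ++ rest.take (i - 1 - t.length) := by
          rw [List.take_append, List.take_of_length_le (by omega)]
        have e2 : (t ++ rest).drop i = rest.drop (i - t.length) := by
          rw [List.drop_append, List.drop_eq_nil_of_le (by omega),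
            List.nil_append]
        rw [e1, e2, List.append_assoc,
          show i - 1 - t.length = i - t.length - 1 by omega]
        simp only [List.map_cons, List.flatten_cons]
        rw [hD2, ht_def]
      · simp only [List.length_cons]; omega

/-- If `S` (with `|S| ≥ 2`) has a cover of size `m` w.r.t. `R`, then the string obtained
by deleting the `i`-th character of `S` has a cover of size at most `m + 1`. -/
theorem delete_cover {σ : Type*} (R S : List σ) (C : List (ℕ × ℕ))
    (hC : IsCover R S C) (hS : 2 ≤ S.length)
    (i : ℕ) (hi1 : 1 ≤ i) (hi2 : i ≤ S.length) :
    ∃ C' : List (ℕ × ℕ),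
      IsCover R (S.take (i - 1) ++ S.drop i) C' ∧ C'.length ≤ C.length + 1 := by
  obtain ⟨hv, hSeq⟩ := hC
  subst hSeq
  obtain ⟨C', h1, h2, h3⟩ := main_lemma R C hv i hi1 hi2
  exact ⟨C', ⟨h1, h2.symm⟩, h3⟩
end
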